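/- Let {P_n} be a monic polynomial sequence with dual sequence {u_n}, and let J be a lowering operator of order k (i.e. J annihilates polynomials of degree < k and deg J(x^{n+k}) = n with nonzero normalization constants λ_{n+k}^{[k]}). Define the normalized image sequence P̃_n(x) = (λ_{n+k}^{[k]})^{−1} J(P_{n+k}(x)), which is a monic polynomial sequence, and let {ũ_n} be its dual sequence. Then ᵗJ(ũ_n) = λ_{n+k}^{[k]} u_{n+k} for all n ≥ 0. -/

import Mathlib

open Polynomial

noncomputable def pmulForm (w : Polynomial ℂ) (u : Module.Dual ℂ (Polynomial ℂ)) :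
    Module.Dual ℂ (Polynomial ℂ) :=
  u ∘ₗ (LinearMap.mulLeft ℂ w)

noncomputable def formD (u : Module.Dual ℂ (Polynomial ℂ)) :
    Module.Dual ℂ (Polynomial ℂ) :=
  -(u ∘ₗ (Polynomial.derivative : Polynomial ℂ →ₗ[ℂ] Polynomial ℂ))

/-- For a lowering operator `J` of order `k`, the dual sequence `{ũ_n}` of the normalized
image MPS `P̃_n = (λ_{n+k}^{[k]})⁻¹ J(P_{n+k})` satisfies `ᵗJ(ũ_n) = λ_{n+k}^{[k]} u_{n+k}`. -/
theorem stmt11 (k : ℕ) (a : ℕ → Polynomial ℂ)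
    (J : Polynomial ℂ → Polynomial ℂ)
    (hJ : ∀ p, J p = ∑ ν ∈ Finset.range (p.natDegree + 1),
        ((Nat.factorial ν : ℂ))⁻¹ • (a ν * Polynomial.derivative^[ν] p))
    (ha : ∀ ν < k, a ν = 0)
    (hadeg : ∀ ν, k ≤ ν → (a ν).degree ≤ ((ν - k : ℕ) : ℕ))
    (lam : ℕ → ℂ)
    (hlam : ∀ n, lam n = ∑ ν ∈ Finset.range (n + 1),
        ((n + k).choose (n + k - ν) : ℂ) * (a (n + k - ν)).coeff (n - ν))
    (hlamne : ∀ n, lam n ≠ 0)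
    (P : ℕ → Polynomial ℂ) (hmonic : ∀ n, (P n).Monic) (hdeg : ∀ n, (P n).natDegree = n)
    (u : ℕ → Module.Dual ℂ (Polynomial ℂ))
    (hdual : ∀ n m, u n (P m) = if n = m then 1 else 0)
    (Pt : ℕ → Polynomial ℂ) (hPt : ∀ n, Pt n = (lam n)⁻¹ • J (P (n + k)))
    (ut : ℕ → Module.Dual ℂ (Polynomial ℂ))
    (hdualt : ∀ n m, ut n (Pt m) = if n = m then 1 else 0) :
    ∀ n, ∀ f : Polynomial ℂ, ut n (J f) = lam n * u (n + k) f := by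

  intro n
  -- J extended sum formula
  have hJ' : ∀ (p : Polynomial ℂ) (N : ℕ), p.natDegree < N →
      J p = ∑ ν ∈ Finset.range N,
        ((Nat.factorial ν : ℂ))⁻¹ • (a ν * Polynomial.derivative^[ν] p) := by
    intro p N hN
    rw [hJ]
    apply Finset.sum_subset
    · exact Finset.range_subset_range.2 hN
    · intro ν _ hν
      simp only [Finset.mem_range, not_lt] at hν
      rw [Polynomial.iterate_derivative_eq_zero (by omega), mul_zero, smul_zero]
  have hJadd : ∀ p q : Polynomial ℂ, J (p + q) = J p + J q := by
    intro p q
    set N := max p.natDegree q.natDegree + 1 with hNdef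
    have h1 : p.natDegree < N := by omega
    have h2 : q.natDegree < N := by omega
    have h3 : (p + q).natDegree < N := by
      have := Polynomial.natDegree_add_le p q
      omega
    rw [hJ' p N h1, hJ' q N h2, hJ' (p + q) N h3, ← Finset.sum_add_distrib]
    apply Finset.sum_congr rfl
    intro ν _
    rw [iterate_map_add, mul_add, smul_add]
  have hJsmul : ∀ (c : ℂ) (p : Polynomial ℂ), J (c • p) = c • J p := by
    intro c p
    have h1 : (c • p).natDegree < p.natDegree + 1 :=
      lt_of_le_of_lt (Polynomial.natDegree_smul_le c p) (Nat.lt_succ_self _)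
    rw [hJ' (c • p) _ h1, hJ, Finset.smul_sum]
    apply Finset.sum_congr rfl
    intro ν _
    rw [Polynomial.iterate_derivative_smul, mul_smul_comm, smul_comm]
  have key : ∀ m, ut n (J (P m)) = lam n * u (n + k) (P m) := by
    intro m
    rcases lt_or_ge m k with h | h
    · have hz : J (P m) = 0 := by
        rw [hJ]
        apply Finset.sum_eq_zero
        intro ν hν
        simp only [Finset.mem_range, hdeg] at hν
        rw [ha ν (by omega), zero_mul, smul_zero]
      rw [hz, map_zero, hdual, if_neg (by omega), mul_zero]
    · obtain ⟨n', rfl⟩ : ∃ n', m = n' + k := ⟨m - k, by omega⟩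
      have hPJ : J (P (n' + k)) = lam n' • Pt n' := by
        rw [hPt, smul_smul, mul_inv_cancel₀ (hlamne n'), one_smul]
      rw [hPJ, map_smul, hdualt, hdual, smul_eq_mul]
      by_cases hnn : n = n'
      · subst hnn
        simp
      · rw [if_neg hnn, if_neg (by omega), mul_zero, mul_zero]
  suffices h : ∀ d (f : Polynomial ℂ), f.natDegree ≤ d →
      ut n (J f) = lam n * u (n + k) f by
    intro f; exact h f.natDegree f le_rfl
  intro d
  induction d with
  | zero =>
    intro f hf
    have hP0 : P 0 = 1 :=
      (Polynomial.Monic.natDegree_eq_zero (hmonic 0)).1 (hdeg 0)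
    have hfc : f = f.coeff 0 • P 0 := by
      rw [hP0, smul_eq_C_mul, mul_one]
      exact Polynomial.eq_C_of_natDegree_le_zero hf
    rw [hfc, hJsmul, map_smul, map_smul, key, smul_eq_mul, smul_eq_mul]
    ring
  | succ d ih =>
    intro f hf
    set c := f.coeff (d + 1) with hc
    have hPcoef : (P (d + 1)).coeff (d + 1) = 1 := by
      have := (hmonic (d + 1)).leadingCoeff
      rwa [Polynomial.leadingCoeff, hdeg] at this
    have hg : (f - c • P (d + 1)).natDegree ≤ d := by
      rw [Polynomial.natDegree_le_iff_coeff_eq_zero]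
      intro i hi
      rw [Polynomial.coeff_sub, Polynomial.coeff_smul, smul_eq_mul]
      rcases eq_or_lt_of_le (Nat.succ_le_of_lt hi) with he | hgt
      · rw [← he, hPcoef, mul_one, ← hc, sub_self]
      · rw [Polynomial.coeff_eq_zero_of_natDegree_lt (by omega),
          Polynomial.coeff_eq_zero_of_natDegree_lt (by rw [hdeg]; omega),
          mul_zero, sub_zero]
    have hfe : f = (f - c • P (d + 1)) + c • P (d + 1) := by ring
    rw [hfe, hJadd, hJsmul, map_add, map_smul, map_add, map_smul,
      ih _ hg, key, smul_eq_mul, smul_eq_mul]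
    ring
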